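/- Let X be a real vector space with Hamel basis {e_i}_{i∈I}, and let A ⊆ X be a nonempty convex set. A point a ∈ A belongs to the algebraic interior cor(A) if and only if for every i ∈ I there exists a scalar δ_i > 0 such that a + δ_i e_i ∈ A and a − δ_i e_i ∈ A. -/

import Mathlib

open Pointwise

/-- Algebraic interior (core) of a set `A` in a real vector space:
`cor A = {x ∈ A | ∀ d, ∃ δ > 0, ∀ λ ∈ [0, δ], x + λ • d ∈ A}`. -/
def cor {X : Type*} [AddCommGroup X] [Module ℝ X] (A : Set X) : Set X :=
  {x | x ∈ A ∧ ∀ d : X, ∃ δ : ℝ, 0 < δ ∧ ∀ lam ∈ Set.Icc (0 : ℝ) δ, x + lam • d ∈ A}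

/-- Relative algebraic interior of `A`: directions are taken in `L(A) = span (A - A)`. -/
def icr {X : Type*} [AddCommGroup X] [Module ℝ X] (A : Set X) : Set X :=
  {x | x ∈ A ∧ ∀ d ∈ Submodule.span ℝ (A - A),
    ∃ δ : ℝ, 0 < δ ∧ ∀ lam ∈ Set.Icc (0 : ℝ) δ, x + lam • d ∈ A}

/-- Vectorial closure of `A`:
`vcl A = {b | ∃ d, ∀ δ > 0, ∃ λ ∈ [0, δ], b + λ • d ∈ A}`. -/
def vcl {X : Type*} [AddCommGroup X] [Module ℝ X] (A : Set X) : Set X :=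
  {b | ∃ d : X, ∀ δ : ℝ, 0 < δ → ∃ lam ∈ Set.Icc (0 : ℝ) δ, b + lam • d ∈ A}

/-- The core convex topology `τ_c`: the topology whose open sets are the unions of
members of `𝔅 = {A | A convex and cor A = A}`; since `𝔅` is a topological basis
(closed under binary intersection, contains `X` and `∅`), this is the topology
generated by `𝔅`. -/
def tauc (X : Type*) [AddCommGroup X] [Module ℝ X] : TopologicalSpace X :=
  TopologicalSpace.generateFrom {A : Set X | Convex ℝ A ∧ cor A = A}

/-- For a nonempty convex set `A` in a real vector space `X` with Hamel basis
`{e i}`, a point `a ∈ A` lies in `cor A` iff for every index `i` there is `δᵢ > 0` with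
`a + δᵢ • e i ∈ A` and `a - δᵢ • e i ∈ A`. -/
theorem stmt0 {X : Type*} [AddCommGroup X] [Module ℝ X] {ι : Type*} (e : Module.Basis ι ℝ X)
    {A : Set X} (hne : A.Nonempty) (hconv : Convex ℝ A) {a : X} (ha : a ∈ A) :
    a ∈ cor A ↔ ∀ i : ι, ∃ δ : ℝ, 0 < δ ∧ a + δ • e i ∈ A ∧ a - δ • e i ∈ A := by
  constructor
  · rintro ⟨-, hd⟩ i
    obtain ⟨δ₁, hδ₁, h₁⟩ := hd (e i)
    obtain ⟨δ₂, hδ₂, h₂⟩ := hd (-(e i))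
    refine ⟨min δ₁ δ₂, lt_min hδ₁ hδ₂, ?_, ?_⟩
    · exact h₁ _ ⟨le_of_lt (lt_min hδ₁ hδ₂), min_le_left _ _⟩
    · have := h₂ _ ⟨le_of_lt (lt_min hδ₁ hδ₂), min_le_right _ _⟩
      rwa [smul_neg, ← sub_eq_add_neg] at this
  · intro h
    set S : Set X := {d | ∃ δ : ℝ, 0 < δ ∧ ∀ lam ∈ Set.Icc (0 : ℝ) δ, a + lam • d ∈ A}
      with hS
    have S0 : (0 : X) ∈ S := ⟨1, one_pos, fun lam _ => by simpa using ha⟩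
    have Sadd : ∀ d₁ d₂ : X, d₁ ∈ S → d₂ ∈ S → d₁ + d₂ ∈ S := by
      rintro d₁ d₂ ⟨δ₁, hδ₁, h₁⟩ ⟨δ₂, hδ₂, h₂⟩
      refine ⟨min δ₁ δ₂ / 2, by positivity, fun lam ⟨hl0, hl⟩ => ?_⟩
      have m₁ : a + (2 * lam) • d₁ ∈ A := h₁ _ ⟨by linarith,
        by nlinarith [min_le_left δ₁ δ₂]⟩
      have m₂ : a + (2 * lam) • d₂ ∈ A := h₂ _ ⟨by linarith,
        by nlinarith [min_le_right δ₁ δ₂]⟩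
      have := hconv m₁ m₂ (by norm_num : (0:ℝ) ≤ 1/2) (by norm_num : (0:ℝ) ≤ 1/2)
        (by norm_num)
      have heq : (1/2 : ℝ) • (a + (2 * lam) • d₁) + (1/2 : ℝ) • (a + (2 * lam) • d₂)
          = a + lam • (d₁ + d₂) := by
        rw [smul_add, smul_add, smul_smul, smul_smul, smul_add]
        module
      rwa [heq] at this
    have Ssmul : ∀ c : ℝ, 0 ≤ c → ∀ d : X, d ∈ S → c • d ∈ S := by
      rintro c hc d ⟨δ, hδ, hAll⟩
      rcases eq_or_lt_of_le hc with rfl | hc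
      · simpa using S0
      · refine ⟨δ / c, by positivity, fun lam ⟨hl0, hl⟩ => ?_⟩
        have : a + (lam * c) • d ∈ A := hAll _ ⟨by positivity,
          by rw [← le_div_iff₀ hc]; exact hl⟩
        rwa [mul_smul] at this
    have key : ∀ d : X, d ∈ S := by
      intro d
      have hdspan : d ∈ Submodule.span ℝ (Set.range e) := by
        rw [e.span_eq]; trivial
      have : d ∈ S ∧ -d ∈ S := by
        induction hdspan using Submodule.span_induction with
        | mem x hx =>
          obtain ⟨i, rfl⟩ := hx
          obtain ⟨δ, hδ, hp, hm⟩ := h i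
          constructor
          · refine ⟨δ, hδ, fun lam ⟨hl0, hl⟩ => ?_⟩
            have : a + lam • e i = (lam / δ) • (a + δ • e i) + (1 - lam / δ) • a := by
              rw [smul_add, smul_smul, div_mul_cancel₀ _ (ne_of_gt hδ)]
              module
            rw [this]
            exact hconv hp ha (by positivity) (by rw [sub_nonneg, div_le_one hδ]; exact hl)
              (by ring)
          · refine ⟨δ, hδ, fun lam ⟨hl0, hl⟩ => ?_⟩
            have : a + lam • (-(e i)) = (lam / δ) • (a - δ • e i) + (1 - lam / δ) • a := by
              rw [smul_sub, smul_smul, div_mul_cancel₀ _ (ne_of_gt hδ)]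
              module
            rw [this]
            exact hconv hm ha (by positivity) (by rw [sub_nonneg, div_le_one hδ]; exact hl)
              (by ring)
        | zero => exact ⟨S0, by simpa using S0⟩
        | add x y _ _ hx hy =>
          exact ⟨Sadd _ _ hx.1 hy.1, by rw [neg_add]; exact Sadd _ _ hx.2 hy.2⟩
        | smul c x _ hx =>
          rcases le_or_gt 0 c with hc | hc
          · refine ⟨Ssmul c hc _ hx.1, ?_⟩
            rw [← smul_neg]; exact Ssmul c hc _ hx.2
          · constructor
            · have : c • x = (-c) • (-x) := by module
              rw [this]; exact Ssmul _ (by linarith) _ hx.2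
            · have : -(c • x) = (-c) • x := by module
              rw [this]; exact Ssmul _ (by linarith) _ hx.1
      exact this.1
    exact ⟨ha, key⟩
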